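/- (Concavity of directed information in the causally conditioned input distribution) Fix finite alphabets 𝒳, 𝒴 and a channel given by a family of conditional pmfs {P(y_i | y^{i-1}, x^i)}_{i=1}^n. For each causally conditioned input distribution Q, given by a family of conditional pmfs {Q(x_i | x^{i-1}, y^{i-1})}_{i=1}^n, define the joint pmf P_Q(x^n, y^n) := ∏_{i=1}^n Q(x_i | x^{i-1}, y^{i-1}) P(y_i | y^{i-1}, x^i) and let I_Q(X^n→Y^n) be the directed information under P_Q. Then the map Q(x^n‖y^{n-1}) := ∏_{i=1}^n Q(x_i | x^{i-1}, y^{i-1}) ↦ I_Q(X^n→Y^n) is concave on the polytope of causally conditioned input distributions: for CC input distributions Q_0, Q_1 and λ ∈ [0,1], the CC distribution whose values are λ·Q_1(x^n‖y^{n-1}) + (1−λ)·Q_0(x^n‖y^{n-1}) yields directed information at least λ·I_{Q_1} + (1−λ)·I_{Q_0}. In particular, maximizing I(X^n→Y^n) over this polytope is a convex optimization problem. -/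

import Mathlib

open Finset

noncomputable section

-- Probability of the event `E` under the pmf `p` on a finite sample space `Ω`.
open Classical in
def pr {Ω : Type*} [Fintype Ω] (p : Ω → ℝ) (E : Ω → Prop) : ℝ :=
  ∑ ω, if E ω then p ω else 0

-- Shannon entropy `H(U)` (pointwise form).
def entropy {Ω α : Type*} [Fintype Ω] (p : Ω → ℝ) (U : Ω → α) : ℝ :=
  -∑ ω, p ω * Real.log (pr p (fun ω' => U ω' = U ω))

-- Conditional Shannon entropy `H(U | V)`.
def condEntropy {Ω α β : Type*} [Fintype Ω] (p : Ω → ℝ) (U : Ω → α) (V : Ω → β) : ℝ :=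
  -∑ ω, p ω * Real.log
      (pr p (fun ω' => U ω' = U ω ∧ V ω' = V ω) / pr p (fun ω' => V ω' = V ω))

-- Mutual information `I(U ; V)`.
def mutualInfo {Ω α β : Type*} [Fintype Ω] (p : Ω → ℝ) (U : Ω → α) (V : Ω → β) : ℝ :=
  ∑ ω, p ω * Real.log
      (pr p (fun ω' => U ω' = U ω ∧ V ω' = V ω) /
        (pr p (fun ω' => U ω' = U ω) * pr p (fun ω' => V ω' = V ω)))

-- Conditional mutual information `I(U ; V | W)`.
def condMutualInfo {Ω α β γ : Type*} [Fintype Ω] (p : Ω → ℝ)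
    (U : Ω → α) (V : Ω → β) (W : Ω → γ) : ℝ :=
  ∑ ω, p ω * Real.log
      ((pr p (fun ω' => U ω' = U ω ∧ V ω' = V ω ∧ W ω' = W ω) *
          pr p (fun ω' => W ω' = W ω)) /
        (pr p (fun ω' => U ω' = U ω ∧ W ω' = W ω) *
          pr p (fun ω' => V ω' = V ω ∧ W ω' = W ω)))

-- The prefix `(X_0, …, X_{i-1})` of a random sequence `X`.
def prefixSeq {Ω 𝒳 : Type*} (X : Ω → ℕ → 𝒳) (i : ℕ) : Ω → (Fin i → 𝒳) :=
  fun ω j => X ω (j : ℕ)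

-- Directed information `I(X^n → Y^n) = ∑_{i=1}^n I(X^i ; Y_i | Y^{i-1})` (0-indexed).
def directedInfo {Ω 𝒳 𝒴 : Type*} [Fintype Ω] (p : Ω → ℝ)
    (X : Ω → ℕ → 𝒳) (Y : Ω → ℕ → 𝒴) (n : ℕ) : ℝ :=
  ∑ i ∈ Finset.range n,
    condMutualInfo p (prefixSeq X (i + 1)) (fun ω => Y ω i) (prefixSeq Y i)

-- Restriction of a length-`n` tuple to its first `k` coordinates (junk beyond `n`).
def restr {𝒳 : Type*} [Nonempty 𝒳] {n : ℕ} (a : Fin n → 𝒳) (k : ℕ) : Fin k → 𝒳 :=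
  fun j => if h : (j : ℕ) < n then a ⟨(j : ℕ), h⟩ else Classical.arbitrary 𝒳

-- Extension of a length-`n` tuple to an infinite sequence (junk beyond `n`).
def extSeq {𝒳 : Type*} [Nonempty 𝒳] {n : ℕ} (a : Fin n → 𝒳) : ℕ → 𝒳 :=
  fun i => if h : i < n then a ⟨i, h⟩ else Classical.arbitrary 𝒳

-- The joint pmf `P_Q(x^n, y^n) = ∏_i Q(x_i | x^{i-1}, y^{i-1}) P(y_i | y^{i-1}, x^i)`
-- induced by a causally conditioned input distribution `Q` and a channel `P`.
def jointOfPolicy {𝒳 𝒴 : Type*} [Nonempty 𝒳] [Nonempty 𝒴] {n : ℕ}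
    (Q : (i : ℕ) → (Fin i → 𝒳) → (Fin i → 𝒴) → 𝒳 → ℝ)
    (P : (i : ℕ) → (Fin (i + 1) → 𝒳) → (Fin i → 𝒴) → 𝒴 → ℝ) :
    (Fin n → 𝒳) × (Fin n → 𝒴) → ℝ :=
  fun ab => ∏ i : Fin n,
    (Q (i : ℕ) (restr ab.1 (i : ℕ)) (restr ab.2 (i : ℕ)) (ab.1 i) *
      P (i : ℕ) (restr ab.1 ((i : ℕ) + 1)) (restr ab.2 (i : ℕ)) (ab.2 i))

section aux

lemma pr_nonneg {Ω : Type*} [Fintype Ω] (p : Ω → ℝ) (hp : ∀ ω, 0 ≤ p ω) (E : Ω → Prop) :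
    0 ≤ pr p E := by
  classical
  unfold pr
  exact Finset.sum_nonneg fun ω _ => by by_cases h : E ω <;> simp [h, hp ω]

lemma pr_congr {Ω : Type*} [Fintype Ω] (p : Ω → ℝ) {E F : Ω → Prop} (h : ∀ ω, E ω ↔ F ω) :
    pr p E = pr p F := by
  classical
  unfold pr
  exact Finset.sum_congr rfl fun ω _ => by rw [if_congr (h ω) rfl rfl]

lemma le_pr {Ω : Type*} [Fintype Ω] (p : Ω → ℝ) (hp : ∀ ω, 0 ≤ p ω) {E : Ω → Prop} {ω : Ω}
    (hE : E ω) : p ω ≤ pr p E := by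
  classical
  unfold pr
  have := Finset.single_le_sum (f := fun ω' => if E ω' then p ω' else 0)
    (fun ω' _ => by by_cases h : E ω' <;> simp [h, hp ω']) (Finset.mem_univ ω)
  simpa [hE] using this

variable {Ω α β γ : Type*} [Fintype Ω]

-- marginal over v
lemma sum_pr_fst [Fintype β] (p : Ω → ℝ) (V : Ω → β) (W : Ω → γ) (w : γ) :
    ∑ v : β, pr p (fun ω' => V ω' = v ∧ W ω' = w) = pr p (fun ω' => W ω' = w) := by
  classical
  unfold pr
  rw [Finset.sum_comm]
  refine Finset.sum_congr rfl fun ω _ => ?_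
  by_cases hw : W ω = w
  · rw [Finset.sum_eq_single (V ω)]
    · simp [hw]
    · intro v _ hv
      rw [if_neg]; rintro ⟨h1, -⟩; exact hv h1.symm
    · simp
  · simp [hw]

-- total mass over w
lemma sum_pr_total [Fintype γ] (p : Ω → ℝ) (W : Ω → γ) :
    ∑ w : γ, pr p (fun ω' => W ω' = w) = ∑ ω, p ω := by
  classical
  unfold pr
  rw [Finset.sum_comm]
  refine Finset.sum_congr rfl fun ω _ => ?_
  rw [Finset.sum_eq_single (W ω)]
  · simp
  · intro w _ hw; rw [if_neg]; exact fun h => hw h.symm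
  · simp

-- grouping
lemma sum_group [Fintype β] [Fintype γ] (q : Ω → ℝ) (V : Ω → β) (W : Ω → γ)
    (f : β → γ → ℝ) :
    ∑ ω, q ω * f (V ω) (W ω) =
      ∑ vw : β × γ, pr q (fun ω' => V ω' = vw.1 ∧ W ω' = vw.2) * f vw.1 vw.2 := by
  classical
  unfold pr
  simp_rw [Finset.sum_mul]
  rw [Finset.sum_comm]
  refine Finset.sum_congr rfl fun ω _ => ?_
  rw [Finset.sum_eq_single ((V ω, W ω) : β × γ)]
  · simp
  · intro vw _ hvw
    have : ¬(V ω = vw.1 ∧ W ω = vw.2) := by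
      intro h; exact hvw (by cases vw; simp_all)
    simp [this]
  · simp

end aux

section gibbs
variable {Ω β γ : Type*} [Fintype Ω] [Fintype β] [Fintype γ]


lemma gibbs (q p : Ω → ℝ) (hq0 : ∀ ω, 0 ≤ q ω) (hq1 : ∑ ω, q ω = 1)
    (hp0 : ∀ ω, 0 ≤ p ω) (hdom : ∀ ω, 0 < q ω → 0 < p ω) (V : Ω → β) (W : Ω → γ) :
    ∑ ω, q ω * Real.log
        (pr q (fun ω' => W ω' = W ω) / pr q (fun ω' => V ω' = V ω ∧ W ω' = W ω)) ≤
      ∑ ω, q ω * Real.log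
        (pr p (fun ω' => W ω' = W ω) / pr p (fun ω' => V ω' = V ω ∧ W ω' = W ω)) := by
  classical
  set g : β → γ → ℝ := fun v w =>
    (pr p (fun ω' => V ω' = v ∧ W ω' = w) * pr q (fun ω' => W ω' = w)) /
      (pr p (fun ω' => W ω' = w) * pr q (fun ω' => V ω' = v ∧ W ω' = w)) with hg
  -- step 2 : ∑ q·t ≤ 1
  have step2 : ∑ ω, q ω * g (V ω) (W ω) ≤ 1 := by
    rw [sum_group q V W g]
    have hbound : ∀ vw : β × γ,
        pr q (fun ω' => V ω' = vw.1 ∧ W ω' = vw.2) * g vw.1 vw.2 ≤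
          pr q (fun ω' => W ω' = vw.2) *
            pr p (fun ω' => V ω' = vw.1 ∧ W ω' = vw.2) /
              pr p (fun ω' => W ω' = vw.2) := by
      rintro ⟨v, w⟩
      set a := pr q (fun ω' => V ω' = v ∧ W ω' = w) with ha
      set x := pr p (fun ω' => V ω' = v ∧ W ω' = w) with hx
      set u := pr q (fun ω' => W ω' = w) with hu
      set c := pr p (fun ω' => W ω' = w) with hc
      have ha0 : 0 ≤ a := pr_nonneg q hq0 _
      have hx0 : 0 ≤ x := pr_nonneg p hp0 _
      have hu0 : 0 ≤ u := pr_nonneg q hq0 _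
      have hc0 : 0 ≤ c := pr_nonneg p hp0 _
      show a * ((x * u) / (c * a)) ≤ u * x / c
      by_cases haz : a = 0
      · simp [haz]; positivity
      · by_cases hcz : c = 0
        · simp [hcz]
        · have : a * ((x * u) / (c * a)) = u * x / c := by field_simp
          rw [this]
    calc ∑ vw : β × γ, pr q (fun ω' => V ω' = vw.1 ∧ W ω' = vw.2) * g vw.1 vw.2
        ≤ ∑ vw : β × γ, pr q (fun ω' => W ω' = vw.2) *
            pr p (fun ω' => V ω' = vw.1 ∧ W ω' = vw.2) /
              pr p (fun ω' => W ω' = vw.2) :=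
          Finset.sum_le_sum fun vw _ => hbound vw
      _ = ∑ w : γ, ∑ v : β, pr q (fun ω' => W ω' = w) *
            pr p (fun ω' => V ω' = v ∧ W ω' = w) / pr p (fun ω' => W ω' = w) := by
          rw [Fintype.sum_prod_type_right]
      _ ≤ ∑ w : γ, pr q (fun ω' => W ω' = w) := by
          refine Finset.sum_le_sum fun w _ => ?_
          have : ∑ v : β, pr q (fun ω' => W ω' = w) *
              pr p (fun ω' => V ω' = v ∧ W ω' = w) / pr p (fun ω' => W ω' = w) =
              pr q (fun ω' => W ω' = w) *
                pr p (fun ω' => W ω' = w) / pr p (fun ω' => W ω' = w) := by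
            rw [← sum_pr_fst p V W w, Finset.mul_sum, Finset.sum_div]
          rw [this]
          by_cases hcz : pr p (fun ω' => W ω' = w) = 0
          · simp [hcz]; exact pr_nonneg q hq0 _
          · rw [mul_div_assoc, div_self hcz, mul_one]
      _ = 1 := by rw [sum_pr_total q W, hq1]
  -- step 1 : pointwise log inequality
  have step1 : ∀ ω, q ω * Real.log
      (pr q (fun ω' => W ω' = W ω) / pr q (fun ω' => V ω' = V ω ∧ W ω' = W ω)) ≤
      q ω * Real.log
        (pr p (fun ω' => W ω' = W ω) / pr p (fun ω' => V ω' = V ω ∧ W ω' = W ω)) +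
      (q ω * g (V ω) (W ω) - q ω) := by
    intro ω
    by_cases hqz : q ω = 0
    · simp [hqz]
    · have hqpos : 0 < q ω := lt_of_le_of_ne (hq0 ω) (Ne.symm hqz)
      have hppos : 0 < p ω := hdom ω hqpos
      have hA : 0 < pr q (fun ω' => W ω' = W ω) :=
        lt_of_lt_of_le hqpos (le_pr q hq0 rfl)
      have hB : 0 < pr q (fun ω' => V ω' = V ω ∧ W ω' = W ω) :=
        lt_of_lt_of_le hqpos (le_pr q hq0 ⟨rfl, rfl⟩)
      have hC : 0 < pr p (fun ω' => W ω' = W ω) :=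
        lt_of_lt_of_le hppos (le_pr p hp0 rfl)
      have hD : 0 < pr p (fun ω' => V ω' = V ω ∧ W ω' = W ω) :=
        lt_of_lt_of_le hppos (le_pr p hp0 ⟨rfl, rfl⟩)
      have hgval : g (V ω) (W ω) =
          (pr p (fun ω' => V ω' = V ω ∧ W ω' = W ω) * pr q (fun ω' => W ω' = W ω)) /
            (pr p (fun ω' => W ω' = W ω) * pr q (fun ω' => V ω' = V ω ∧ W ω' = W ω)) := rfl
      have hgpos : 0 < g (V ω) (W ω) := by
        rw [hgval]; positivity
      have hlog : Real.log
          (pr q (fun ω' => W ω' = W ω) / pr q (fun ω' => V ω' = V ω ∧ W ω' = W ω)) -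
          Real.log
          (pr p (fun ω' => W ω' = W ω) / pr p (fun ω' => V ω' = V ω ∧ W ω' = W ω)) =
          Real.log (g (V ω) (W ω)) := by
        rw [hgval, Real.log_div hA.ne' hB.ne', Real.log_div hC.ne' hD.ne',
          Real.log_div (by positivity) (by positivity), Real.log_mul hD.ne' hA.ne',
          Real.log_mul hC.ne' hB.ne']
        ring
      have hle : Real.log (g (V ω) (W ω)) ≤ g (V ω) (W ω) - 1 :=
        Real.log_le_sub_one_of_pos hgpos
      nlinarith [hle, hlog, hqpos.le]
  calc ∑ ω, q ω * Real.log
        (pr q (fun ω' => W ω' = W ω) / pr q (fun ω' => V ω' = V ω ∧ W ω' = W ω))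
      ≤ ∑ ω, (q ω * Real.log
          (pr p (fun ω' => W ω' = W ω) / pr p (fun ω' => V ω' = V ω ∧ W ω' = W ω)) +
          (q ω * g (V ω) (W ω) - q ω)) := Finset.sum_le_sum fun ω _ => step1 ω
    _ = (∑ ω, q ω * Real.log
          (pr p (fun ω' => W ω' = W ω) / pr p (fun ω' => V ω' = V ω ∧ W ω' = W ω))) +
          ((∑ ω, q ω * g (V ω) (W ω)) - ∑ ω, q ω) := by
        rw [Finset.sum_add_distrib, Finset.sum_sub_distrib]
    _ ≤ _ := by rw [hq1]; linarith [step2]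

end gibbs


section key
variable {Ω α β γ : Type*} [Fintype Ω]

lemma cmi_decomp (q : Ω → ℝ) (hq : ∀ ω, 0 ≤ q ω)
    (U : Ω → α) (V : Ω → β) (W : Ω → γ) (c : Ω → ℝ)
    (hc : ∀ ω, pr q (fun ω' => U ω' = U ω ∧ V ω' = V ω ∧ W ω' = W ω) =
      c ω * pr q (fun ω' => U ω' = U ω ∧ W ω' = W ω)) :
    condMutualInfo q U V W =
      (∑ ω, q ω * Real.log (c ω)) +
        ∑ ω, q ω * Real.log
          (pr q (fun ω' => W ω' = W ω) / pr q (fun ω' => V ω' = V ω ∧ W ω' = W ω)) := by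
  classical
  unfold condMutualInfo
  rw [← Finset.sum_add_distrib]
  refine Finset.sum_congr rfl fun ω _ => ?_
  by_cases hqz : q ω = 0
  · simp [hqz]
  · have hqpos : 0 < q ω := lt_of_le_of_ne (hq ω) (Ne.symm hqz)
    have hUVW : 0 < pr q (fun ω' => U ω' = U ω ∧ V ω' = V ω ∧ W ω' = W ω) :=
      lt_of_lt_of_le hqpos (le_pr q hq ⟨rfl, rfl, rfl⟩)
    have hUW : 0 < pr q (fun ω' => U ω' = U ω ∧ W ω' = W ω) :=
      lt_of_lt_of_le hqpos (le_pr q hq ⟨rfl, rfl⟩)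
    have hVW : 0 < pr q (fun ω' => V ω' = V ω ∧ W ω' = W ω) :=
      lt_of_lt_of_le hqpos (le_pr q hq ⟨rfl, rfl⟩)
    have hW : 0 < pr q (fun ω' => W ω' = W ω) :=
      lt_of_lt_of_le hqpos (le_pr q hq rfl)
    have hcpos : 0 < c ω := by
      have h := hc ω
      nlinarith [hUVW, hUW]
    rw [hc ω]
    have : (c ω * pr q (fun ω' => U ω' = U ω ∧ W ω' = W ω) *
          pr q (fun ω' => W ω' = W ω)) /
        (pr q (fun ω' => U ω' = U ω ∧ W ω' = W ω) *
          pr q (fun ω' => V ω' = V ω ∧ W ω' = W ω)) =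
        c ω * (pr q (fun ω' => W ω' = W ω) /
          pr q (fun ω' => V ω' = V ω ∧ W ω' = W ω)) := by
      field_simp
    rw [this, Real.log_mul hcpos.ne' (by positivity), mul_add]

lemma cmi_concave [Fintype β] [Fintype γ] (p0 p1 : Ω → ℝ)
    (h00 : ∀ ω, 0 ≤ p0 ω) (h0s : ∑ ω, p0 ω = 1)
    (h10 : ∀ ω, 0 ≤ p1 ω) (h1s : ∑ ω, p1 ω = 1)
    (lam : ℝ) (hl0 : 0 < lam) (hl1 : lam < 1)
    (U : Ω → α) (V : Ω → β) (W : Ω → γ) (c : Ω → ℝ)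
    (hc0 : ∀ ω, pr p0 (fun ω' => U ω' = U ω ∧ V ω' = V ω ∧ W ω' = W ω) =
      c ω * pr p0 (fun ω' => U ω' = U ω ∧ W ω' = W ω))
    (hc1 : ∀ ω, pr p1 (fun ω' => U ω' = U ω ∧ V ω' = V ω ∧ W ω' = W ω) =
      c ω * pr p1 (fun ω' => U ω' = U ω ∧ W ω' = W ω))
    (hcm : ∀ ω, pr (fun ω'' => lam * p1 ω'' + (1 - lam) * p0 ω'')
        (fun ω' => U ω' = U ω ∧ V ω' = V ω ∧ W ω' = W ω) =
      c ω * pr (fun ω'' => lam * p1 ω'' + (1 - lam) * p0 ω'')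
        (fun ω' => U ω' = U ω ∧ W ω' = W ω)) :
    lam * condMutualInfo p1 U V W + (1 - lam) * condMutualInfo p0 U V W ≤
      condMutualInfo (fun ω => lam * p1 ω + (1 - lam) * p0 ω) U V W := by
  classical
  set pm : Ω → ℝ := fun ω => lam * p1 ω + (1 - lam) * p0 ω with hpm
  have hm0 : ∀ ω, 0 ≤ pm ω := fun ω => by
    have := h00 ω; have := h10 ω; simp only [hpm]; nlinarith
  rw [cmi_decomp p0 h00 U V W c hc0, cmi_decomp p1 h10 U V W c hc1,
    cmi_decomp pm hm0 U V W c hcm]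
  have hBm : ∑ ω, pm ω * Real.log
      (pr pm (fun ω' => W ω' = W ω) / pr pm (fun ω' => V ω' = V ω ∧ W ω' = W ω)) =
      lam * ∑ ω, p1 ω * Real.log
        (pr pm (fun ω' => W ω' = W ω) / pr pm (fun ω' => V ω' = V ω ∧ W ω' = W ω)) +
      (1 - lam) * ∑ ω, p0 ω * Real.log
        (pr pm (fun ω' => W ω' = W ω) / pr pm (fun ω' => V ω' = V ω ∧ W ω' = W ω)) := by
    rw [Finset.mul_sum, Finset.mul_sum, ← Finset.sum_add_distrib]
    exact Finset.sum_congr rfl fun ω _ => by simp only [hpm]; ring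
  have hLm : ∑ ω, pm ω * Real.log (c ω) =
      lam * ∑ ω, p1 ω * Real.log (c ω) + (1 - lam) * ∑ ω, p0 ω * Real.log (c ω) := by
    rw [Finset.mul_sum, Finset.mul_sum, ← Finset.sum_add_distrib]
    exact Finset.sum_congr rfl fun ω _ => by simp only [hpm]; ring
  have hg1 : ∑ ω, p1 ω * Real.log
      (pr p1 (fun ω' => W ω' = W ω) / pr p1 (fun ω' => V ω' = V ω ∧ W ω' = W ω)) ≤
      ∑ ω, p1 ω * Real.log
        (pr pm (fun ω' => W ω' = W ω) / pr pm (fun ω' => V ω' = V ω ∧ W ω' = W ω)) :=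
    gibbs p1 pm h10 h1s hm0 (fun ω h1 => by
      have := h00 ω; simp only [hpm]; nlinarith) V W
  have hg0 : ∑ ω, p0 ω * Real.log
      (pr p0 (fun ω' => W ω' = W ω) / pr p0 (fun ω' => V ω' = V ω ∧ W ω' = W ω)) ≤
      ∑ ω, p0 ω * Real.log
        (pr pm (fun ω' => W ω' = W ω) / pr pm (fun ω' => V ω' = V ω ∧ W ω' = W ω)) :=
    gibbs p0 pm h00 h0s hm0 (fun ω h0 => by
      have := h10 ω; simp only [hpm]; nlinarith) V W
  rw [hBm, hLm]
  nlinarith [hg1, hg0, hl0.le, hl1.le]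
end key

-- restr is unchanged by updates beyond the restriction length
lemma restr_update {𝒳 : Type*} [Nonempty 𝒳] {n k m : ℕ} (hk : k < n) (hm : m ≤ k)
    (a : Fin n → 𝒳) (c : 𝒳) :
    restr (Function.update a ⟨k, hk⟩ c) m = restr a m := by
  classical
  funext j
  unfold restr
  by_cases h : (j : ℕ) < n
  · simp only [dif_pos h]
    exact Function.update_of_ne (Fin.ne_of_val_ne
      (show (j : ℕ) ≠ k by have := j.isLt; omega)) _ _
  · simp [h]

lemma prod_if_succ {M : Type*} [CommMonoid M] {n k : ℕ} (hk : k < n) (f : Fin n → M) :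
    (∏ j : Fin n, if (j : ℕ) < k + 1 then f j else 1) =
      (∏ j : Fin n, if (j : ℕ) < k then f j else 1) * f ⟨k, hk⟩ := by
  classical
  have key : ∀ j : Fin n, (if (j : ℕ) < k + 1 then f j else 1) =
      (if (j : ℕ) < k then f j else 1) * (if j = ⟨k, hk⟩ then f j else 1) := by
    intro j
    rcases lt_trichotomy (j : ℕ) k with h | h | h
    · rw [if_pos (by omega), if_pos h, if_neg (fun he => by
        rw [he] at h; simp at h), mul_one]
    · have hj : j = ⟨k, hk⟩ := Fin.ext h
      rw [if_pos (by omega), if_neg (by omega), hj, if_pos rfl, one_mul]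
    · rw [if_neg (by omega), if_neg (by omega), if_neg (fun he => by
        rw [he] at h; simp at h), mul_one]
  rw [Finset.prod_congr rfl fun j _ => key j, Finset.prod_mul_distrib]
  congr 1
  rw [Finset.prod_ite_eq' Finset.univ (⟨k, hk⟩ : Fin n) f]
  simp

section joint
variable {𝒳 𝒴 : Type*} [Fintype 𝒳] [Fintype 𝒴] [Nonempty 𝒳] [Nonempty 𝒴] {n : ℕ}
  (Q : (i : ℕ) → (Fin i → 𝒳) → (Fin i → 𝒴) → 𝒳 → ℝ)
  (P : (i : ℕ) → (Fin (i + 1) → 𝒳) → (Fin i → 𝒴) → 𝒴 → ℝ)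

lemma telescopeA (hQ1 : ∀ i xs ys, ∑ x, Q i xs ys x = 1)
    (hP1 : ∀ i xs ys, ∑ y, P i xs ys y = 1) :
    ∀ (d k : ℕ), k + d = n → ∀ (a : Fin n → 𝒳) (b : Fin n → 𝒴),
      pr (jointOfPolicy (n := n) Q P)
        (fun ω => (∀ j : Fin n, (j : ℕ) < k → ω.1 j = a j) ∧
          (∀ j : Fin n, (j : ℕ) < k → ω.2 j = b j)) =
      ∏ j : Fin n, if (j : ℕ) < k then
          Q (j : ℕ) (restr a (j : ℕ)) (restr b (j : ℕ)) (a j) *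
            P (j : ℕ) (restr a ((j : ℕ) + 1)) (restr b (j : ℕ)) (b j)
        else 1 := by
  classical
  intro d
  induction d with
  | zero =>
    intro k hk a b
    have hkn : k = n := by omega
    have hiff : ∀ ω : (Fin n → 𝒳) × (Fin n → 𝒴),
        ((∀ j : Fin n, (j : ℕ) < k → ω.1 j = a j) ∧
          (∀ j : Fin n, (j : ℕ) < k → ω.2 j = b j)) ↔ ω = (a, b) := by
      intro ω
      constructor
      · rintro ⟨h1, h2⟩
        exact Prod.ext (funext fun j => h1 j (by have := j.isLt; omega))
          (funext fun j => h2 j (by have := j.isLt; omega))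
      · rintro rfl
        exact ⟨fun _ _ => rfl, fun _ _ => rfl⟩
    have h1 : (∑ ω : (Fin n → 𝒳) × (Fin n → 𝒴),
        if ((∀ j : Fin n, (j : ℕ) < k → ω.1 j = a j) ∧
            (∀ j : Fin n, (j : ℕ) < k → ω.2 j = b j)) then
          jointOfPolicy (n := n) Q P ω else 0) =
        jointOfPolicy (n := n) Q P (a, b) := by
      rw [Finset.sum_congr rfl fun ω _ => if_congr (hiff ω) rfl rfl,
        Finset.sum_ite_eq' Finset.univ ((a, b) : (Fin n → 𝒳) × (Fin n → 𝒴))]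
      simp
    have h2 : jointOfPolicy (n := n) Q P (a, b) =
        ∏ j : Fin n, if (j : ℕ) < k then
          Q (j : ℕ) (restr a (j : ℕ)) (restr b (j : ℕ)) (a j) *
            P (j : ℕ) (restr a ((j : ℕ) + 1)) (restr b (j : ℕ)) (b j)
        else 1 := by
      unfold jointOfPolicy
      exact Finset.prod_congr rfl fun j _ =>
        (if_pos (show (j : ℕ) < k by have := j.isLt; omega)).symm
    unfold pr
    refine Eq.trans ?_ (h1.trans h2)
    exact Finset.sum_congr rfl fun ω _ => by congr 1
  | succ d ih =>
    intro k hk a b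
    have hkn : k < n := by omega
    set kf : Fin n := ⟨k, hkn⟩ with hkf
    -- partition step
    have hpart : (∑ ce : 𝒳 × 𝒴, pr (jointOfPolicy (n := n) Q P)
        (fun ω => (∀ j : Fin n, (j : ℕ) < k + 1 →
            ω.1 j = Function.update a kf ce.1 j) ∧
          (∀ j : Fin n, (j : ℕ) < k + 1 → ω.2 j = Function.update b kf ce.2 j))) =
        pr (jointOfPolicy (n := n) Q P)
          (fun ω => (∀ j : Fin n, (j : ℕ) < k → ω.1 j = a j) ∧
            (∀ j : Fin n, (j : ℕ) < k → ω.2 j = b j)) := by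
      unfold pr
      rw [Finset.sum_comm]
      refine Finset.sum_congr rfl fun ω _ => ?_
      have hiff : ∀ ce : 𝒳 × 𝒴,
          ((∀ j : Fin n, (j : ℕ) < k + 1 → ω.1 j = Function.update a kf ce.1 j) ∧
            (∀ j : Fin n, (j : ℕ) < k + 1 → ω.2 j = Function.update b kf ce.2 j)) ↔
          (ce = (ω.1 kf, ω.2 kf) ∧
            ((∀ j : Fin n, (j : ℕ) < k → ω.1 j = a j) ∧
              (∀ j : Fin n, (j : ℕ) < k → ω.2 j = b j))) := by
        rintro ⟨c, e⟩
        constructor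
        · rintro ⟨h1, h2⟩
          have hc : ω.1 kf = c := by
            have := h1 kf (Nat.lt_succ_self k)
            simpa [Function.update_self] using this
          have he : ω.2 kf = e := by
            have := h2 kf (Nat.lt_succ_self k)
            simpa [Function.update_self] using this
          refine ⟨by simp [hc, he], fun j hj => ?_, fun j hj => ?_⟩
          · have := h1 j (by omega)
            rwa [Function.update_of_ne (Fin.ne_of_val_ne
              (show (j : ℕ) ≠ k by omega))] at this
          · have := h2 j (by omega)
            rwa [Function.update_of_ne (Fin.ne_of_val_ne
              (show (j : ℕ) ≠ k by omega))] at this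
        · rintro ⟨hce, h1, h2⟩
          obtain ⟨hc, he⟩ := Prod.mk.injEq .. ▸ hce
          constructor
          · intro j hj
            rcases Nat.lt_or_ge (j : ℕ) k with h | h
            · rw [Function.update_of_ne (Fin.ne_of_val_ne
                (show (j : ℕ) ≠ k by omega))]
              exact h1 j h
            · have hjk : j = kf := Fin.ext (show (j : ℕ) = k by omega)
              rw [hjk, Function.update_self, ← hc]
          · intro j hj
            rcases Nat.lt_or_ge (j : ℕ) k with h | h
            · rw [Function.update_of_ne (Fin.ne_of_val_ne
                (show (j : ℕ) ≠ k by omega))]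
              exact h2 j h
            · have hjk : j = kf := Fin.ext (show (j : ℕ) = k by omega)
              rw [hjk, Function.update_self, ← he]
      have hsum : (∑ ce : 𝒳 × 𝒴,
          if ((∀ j : Fin n, (j : ℕ) < k + 1 → ω.1 j = Function.update a kf ce.1 j) ∧
              (∀ j : Fin n, (j : ℕ) < k + 1 → ω.2 j = Function.update b kf ce.2 j)) then
            jointOfPolicy (n := n) Q P ω else 0) =
          (if ((∀ j : Fin n, (j : ℕ) < k → ω.1 j = a j) ∧
              (∀ j : Fin n, (j : ℕ) < k → ω.2 j = b j)) then
            jointOfPolicy (n := n) Q P ω else 0) := by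
        rw [Finset.sum_congr rfl fun ce _ => if_congr (hiff ce) rfl rfl]
        by_cases hE : (∀ j : Fin n, (j : ℕ) < k → ω.1 j = a j) ∧
            (∀ j : Fin n, (j : ℕ) < k → ω.2 j = b j)
        · have h2 : ∀ ce : 𝒳 × 𝒴, ((ce = (ω.1 kf, ω.2 kf) ∧
              ((∀ j : Fin n, (j : ℕ) < k → ω.1 j = a j) ∧
                (∀ j : Fin n, (j : ℕ) < k → ω.2 j = b j))) ↔
              ce = (ω.1 kf, ω.2 kf)) := fun ce => and_iff_left hE
          rw [Finset.sum_congr rfl fun ce _ => if_congr (h2 ce) rfl rfl,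
            Finset.sum_ite_eq' Finset.univ ((ω.1 kf, ω.2 kf) : 𝒳 × 𝒴)
              (fun _ => jointOfPolicy (n := n) Q P ω), if_pos hE]
          simp
        · simp [hE]
      refine Eq.trans (Finset.sum_congr rfl fun ce _ => by congr 1) (hsum.trans ?_)
      congr 1
    rw [← hpart]
    -- apply IH to each summand and compute
    have hstep : ∀ ce : 𝒳 × 𝒴, pr (jointOfPolicy (n := n) Q P)
        (fun ω => (∀ j : Fin n, (j : ℕ) < k + 1 →
            ω.1 j = Function.update a kf ce.1 j) ∧
          (∀ j : Fin n, (j : ℕ) < k + 1 → ω.2 j = Function.update b kf ce.2 j)) =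
        (∏ j : Fin n, if (j : ℕ) < k then
            Q (j : ℕ) (restr a (j : ℕ)) (restr b (j : ℕ)) (a j) *
              P (j : ℕ) (restr a ((j : ℕ) + 1)) (restr b (j : ℕ)) (b j)
          else 1) *
          (Q k (restr a k) (restr b k) ce.1 *
            P k (restr (Function.update a kf ce.1) (k + 1)) (restr b k) ce.2) := by
      rintro ⟨c, e⟩
      rw [ih (k + 1) (by omega) (Function.update a kf c) (Function.update b kf e)]
      rw [prod_if_succ hkn]
      congr 1
      · refine Finset.prod_congr rfl fun j _ => ?_
        by_cases hj : (j : ℕ) < k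
        · rw [if_pos hj, if_pos hj,
            restr_update hkn (by omega), restr_update hkn (by omega),
            restr_update hkn (by omega),
            Function.update_of_ne (Fin.ne_of_val_ne (show (j : ℕ) ≠ k by omega)),
            Function.update_of_ne (Fin.ne_of_val_ne (show (j : ℕ) ≠ k by omega))]
        · rw [if_neg hj, if_neg hj]
      · show Q k (restr (Function.update a kf c) k) (restr (Function.update b kf e) k)
            (Function.update a kf c kf) *
          P k (restr (Function.update a kf c) (k + 1))
            (restr (Function.update b kf e) k) (Function.update b kf e kf) = _
        rw [restr_update hkn le_rfl, restr_update hkn le_rfl,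
          Function.update_self, Function.update_self]
    rw [Finset.sum_congr rfl fun ce _ => hstep ce]
    rw [← Finset.mul_sum]
    rw [Fintype.sum_prod_type]
    have : ∀ c : 𝒳, ∑ e : 𝒴, Q k (restr a k) (restr b k) c *
        P k (restr (Function.update a kf c) (k + 1)) (restr b k) e =
        Q k (restr a k) (restr b k) c := by
      intro c
      rw [← Finset.mul_sum, hP1, mul_one]
    rw [Finset.sum_congr rfl fun c _ => this c, hQ1, mul_one]

lemma telescopeB (hQ1 : ∀ i xs ys, ∑ x, Q i xs ys x = 1)
    (hP1 : ∀ i xs ys, ∑ y, P i xs ys y = 1) (k : ℕ) (hkn : k < n)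
    (a : Fin n → 𝒳) (b : Fin n → 𝒴) :
    pr (jointOfPolicy (n := n) Q P)
      (fun ω => (∀ j : Fin n, (j : ℕ) < k + 1 → ω.1 j = a j) ∧
        (∀ j : Fin n, (j : ℕ) < k → ω.2 j = b j)) =
    (∏ j : Fin n, if (j : ℕ) < k then
        Q (j : ℕ) (restr a (j : ℕ)) (restr b (j : ℕ)) (a j) *
          P (j : ℕ) (restr a ((j : ℕ) + 1)) (restr b (j : ℕ)) (b j)
      else 1) * Q k (restr a k) (restr b k) (a ⟨k, hkn⟩) := by
  classical
  set kf : Fin n := ⟨k, hkn⟩ with hkf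
  have hpart : (∑ e : 𝒴, pr (jointOfPolicy (n := n) Q P)
      (fun ω => (∀ j : Fin n, (j : ℕ) < k + 1 → ω.1 j = a j) ∧
        (∀ j : Fin n, (j : ℕ) < k + 1 → ω.2 j = Function.update b kf e j))) =
      pr (jointOfPolicy (n := n) Q P)
        (fun ω => (∀ j : Fin n, (j : ℕ) < k + 1 → ω.1 j = a j) ∧
          (∀ j : Fin n, (j : ℕ) < k → ω.2 j = b j)) := by
    unfold pr
    rw [Finset.sum_comm]
    refine Finset.sum_congr rfl fun ω _ => ?_
    have hiff : ∀ e : 𝒴,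
        ((∀ j : Fin n, (j : ℕ) < k + 1 → ω.1 j = a j) ∧
          (∀ j : Fin n, (j : ℕ) < k + 1 → ω.2 j = Function.update b kf e j)) ↔
        (e = ω.2 kf ∧ ((∀ j : Fin n, (j : ℕ) < k + 1 → ω.1 j = a j) ∧
          (∀ j : Fin n, (j : ℕ) < k → ω.2 j = b j))) := by
      intro e
      constructor
      · rintro ⟨h1, h2⟩
        have he : ω.2 kf = e := by
          have := h2 kf (Nat.lt_succ_self k)
          simpa [Function.update_self] using this
        refine ⟨he.symm, h1, fun j hj => ?_⟩
        have := h2 j (by omega)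
        rwa [Function.update_of_ne (Fin.ne_of_val_ne
          (show (j : ℕ) ≠ k by omega))] at this
      · rintro ⟨he, h1, h2⟩
        refine ⟨h1, fun j hj => ?_⟩
        rcases Nat.lt_or_ge (j : ℕ) k with h | h
        · rw [Function.update_of_ne (Fin.ne_of_val_ne (show (j : ℕ) ≠ k by omega))]
          exact h2 j h
        · have hjk : j = kf := Fin.ext (show (j : ℕ) = k by omega)
          rw [hjk, Function.update_self, ← he]
    have hsum : (∑ e : 𝒴,
        if ((∀ j : Fin n, (j : ℕ) < k + 1 → ω.1 j = a j) ∧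
            (∀ j : Fin n, (j : ℕ) < k + 1 → ω.2 j = Function.update b kf e j)) then
          jointOfPolicy (n := n) Q P ω else 0) =
        (if ((∀ j : Fin n, (j : ℕ) < k + 1 → ω.1 j = a j) ∧
            (∀ j : Fin n, (j : ℕ) < k → ω.2 j = b j)) then
          jointOfPolicy (n := n) Q P ω else 0) := by
      rw [Finset.sum_congr rfl fun e _ => if_congr (hiff e) rfl rfl]
      by_cases hE : (∀ j : Fin n, (j : ℕ) < k + 1 → ω.1 j = a j) ∧
          (∀ j : Fin n, (j : ℕ) < k → ω.2 j = b j)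
      · have h2 : ∀ e : 𝒴, ((e = ω.2 kf ∧
            ((∀ j : Fin n, (j : ℕ) < k + 1 → ω.1 j = a j) ∧
              (∀ j : Fin n, (j : ℕ) < k → ω.2 j = b j))) ↔ e = ω.2 kf) :=
          fun e => and_iff_left hE
        rw [Finset.sum_congr rfl fun e _ => if_congr (h2 e) rfl rfl,
          Finset.sum_ite_eq' Finset.univ (ω.2 kf)
            (fun _ => jointOfPolicy (n := n) Q P ω), if_pos hE]
        simp
      · rw [if_neg hE]; exact Finset.sum_eq_zero fun e _ => if_neg fun h => hE h.2
    refine Eq.trans (Finset.sum_congr rfl fun e _ => by congr 1) (hsum.trans ?_)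
    congr 1
  rw [← hpart]
  have hstep : ∀ e : 𝒴, pr (jointOfPolicy (n := n) Q P)
      (fun ω => (∀ j : Fin n, (j : ℕ) < k + 1 → ω.1 j = a j) ∧
        (∀ j : Fin n, (j : ℕ) < k + 1 → ω.2 j = Function.update b kf e j)) =
      (∏ j : Fin n, if (j : ℕ) < k then
          Q (j : ℕ) (restr a (j : ℕ)) (restr b (j : ℕ)) (a j) *
            P (j : ℕ) (restr a ((j : ℕ) + 1)) (restr b (j : ℕ)) (b j)
        else 1) *
        (Q k (restr a k) (restr b k) (a kf) *
          P k (restr a (k + 1)) (restr b k) e) := by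
    intro e
    rw [telescopeA Q P hQ1 hP1 (n - (k + 1)) (k + 1) (by omega) a
      (Function.update b kf e)]
    rw [prod_if_succ hkn]
    congr 1
    · refine Finset.prod_congr rfl fun j _ => ?_
      by_cases hj : (j : ℕ) < k
      · rw [if_pos hj, if_pos hj,
          restr_update hkn (show (j : ℕ) ≤ k by omega),
          Function.update_of_ne (Fin.ne_of_val_ne (show (j : ℕ) ≠ k by omega))]
      · rw [if_neg hj, if_neg hj]
    · show Q k (restr a k) (restr (Function.update b kf e) k) (a kf) *
          P k (restr a (k + 1)) (restr (Function.update b kf e) k)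
            (Function.update b kf e kf) = _
      rw [restr_update hkn le_rfl, Function.update_self]
  rw [Finset.sum_congr rfl fun e _ => hstep e, ← Finset.mul_sum, ← Finset.mul_sum,
    hP1, mul_one]

lemma joint_sum_one (hQ1 : ∀ i xs ys, ∑ x, Q i xs ys x = 1)
    (hP1 : ∀ i xs ys, ∑ y, P i xs ys y = 1) :
    ∑ ω : (Fin n → 𝒳) × (Fin n → 𝒴), jointOfPolicy (n := n) Q P ω = 1 := by
  classical
  have h := telescopeA (n := n) Q P hQ1 hP1 n 0 (by omega)
    (fun _ => Classical.arbitrary 𝒳) (fun _ => Classical.arbitrary 𝒴)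
  have h2 : pr (jointOfPolicy (n := n) Q P)
      (fun ω => (∀ j : Fin n, (j : ℕ) < 0 → ω.1 j = Classical.arbitrary 𝒳) ∧
        (∀ j : Fin n, (j : ℕ) < 0 → ω.2 j = Classical.arbitrary 𝒴)) =
      ∑ ω : (Fin n → 𝒳) × (Fin n → 𝒴), jointOfPolicy (n := n) Q P ω := by
    unfold pr
    refine Finset.sum_congr rfl fun ω _ => ?_
    rw [if_pos ⟨fun j hj => absurd hj (by omega), fun j hj => absurd hj (by omega)⟩]
  rw [← h2, h]
  simp

omit [Fintype 𝒳] [Fintype 𝒴] in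
lemma joint_nonneg (hQ0 : ∀ i xs ys x, 0 ≤ Q i xs ys x)
    (hP0 : ∀ i xs ys y, 0 ≤ P i xs ys y) (ω : (Fin n → 𝒳) × (Fin n → 𝒴)) :
    0 ≤ jointOfPolicy (n := n) Q P ω :=
  Finset.prod_nonneg fun j _ => mul_nonneg (hQ0 _ _ _ _) (hP0 _ _ _ _)

lemma channel_cond (hQ1 : ∀ i xs ys, ∑ x, Q i xs ys x = 1)
    (hP1 : ∀ i xs ys, ∑ y, P i xs ys y = 1) (i : ℕ) (hi : i < n)
    (ω : (Fin n → 𝒳) × (Fin n → 𝒴)) :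
    pr (jointOfPolicy (n := n) Q P)
      (fun ω' => (∀ j : Fin n, (j : ℕ) < i + 1 → ω'.1 j = ω.1 j) ∧
        (∀ j : Fin n, (j : ℕ) < i + 1 → ω'.2 j = ω.2 j)) =
    P i (restr ω.1 (i + 1)) (restr ω.2 i) (ω.2 ⟨i, hi⟩) *
      pr (jointOfPolicy (n := n) Q P)
        (fun ω' => (∀ j : Fin n, (j : ℕ) < i + 1 → ω'.1 j = ω.1 j) ∧
          (∀ j : Fin n, (j : ℕ) < i → ω'.2 j = ω.2 j)) := by
  rw [telescopeA Q P hQ1 hP1 (n - (i + 1)) (i + 1) (by omega) ω.1 ω.2,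
    telescopeB Q P hQ1 hP1 i hi ω.1 ω.2, prod_if_succ hi]
  ring

end joint



section events
variable {𝒳 : Type*} [Nonempty 𝒳] {n m : ℕ}

lemma extSeq_prefix_eq_iff (hm : m ≤ n) (x' x : Fin n → 𝒳) :
    ((fun j : Fin m => extSeq x' (j : ℕ)) = fun j : Fin m => extSeq x (j : ℕ)) ↔
      ∀ j : Fin n, (j : ℕ) < m → x' j = x j := by
  rw [funext_iff]
  constructor
  · intro h j hj
    have h2 := h ⟨(j : ℕ), hj⟩
    unfold extSeq at h2
    rw [dif_pos (show ((⟨(j : ℕ), hj⟩ : Fin m) : ℕ) < n from j.isLt),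
      dif_pos (show ((⟨(j : ℕ), hj⟩ : Fin m) : ℕ) < n from j.isLt)] at h2
    simpa using h2
  · intro h j
    have hj : (j : ℕ) < n := lt_of_lt_of_le j.isLt hm
    unfold extSeq
    rw [dif_pos hj, dif_pos hj]
    exact h ⟨(j : ℕ), hj⟩ j.isLt

lemma extSeq_eq_iff (hm : m < n) (x' x : Fin n → 𝒳) :
    (extSeq x' m = extSeq x m) ↔ x' ⟨m, hm⟩ = x ⟨m, hm⟩ := by
  unfold extSeq
  rw [dif_pos hm, dif_pos hm]

end events

/-- concavity of directed information in the causally conditioned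
input distribution: if the causally conditioned input distribution of `Q` is the
convex combination `λ·Q1(x^n‖y^{n-1}) + (1−λ)·Q0(x^n‖y^{n-1})`, then the directed
information under `Q` is at least `λ·I_{Q1} + (1−λ)·I_{Q0}`. -/
theorem directedInfo_concave_in_ccInput
    {𝒳 𝒴 : Type*} [Fintype 𝒳] [Fintype 𝒴] [Nonempty 𝒳] [Nonempty 𝒴] (n : ℕ)
    (P : (i : ℕ) → (Fin (i + 1) → 𝒳) → (Fin i → 𝒴) → 𝒴 → ℝ)
    (hP0 : ∀ i xs ys y, 0 ≤ P i xs ys y)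
    (hP1 : ∀ i xs ys, ∑ y, P i xs ys y = 1)
    (Q Q0 Q1 : (i : ℕ) → (Fin i → 𝒳) → (Fin i → 𝒴) → 𝒳 → ℝ)
    (hQ0 : ∀ i xs ys x, 0 ≤ Q i xs ys x) (hQ1 : ∀ i xs ys, ∑ x, Q i xs ys x = 1)
    (hQ00 : ∀ i xs ys x, 0 ≤ Q0 i xs ys x) (hQ01 : ∀ i xs ys, ∑ x, Q0 i xs ys x = 1)
    (hQ10 : ∀ i xs ys x, 0 ≤ Q1 i xs ys x) (hQ11 : ∀ i xs ys, ∑ x, Q1 i xs ys x = 1)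
    (lam : ℝ) (hlam0 : 0 ≤ lam) (hlam1 : lam ≤ 1)
    (hmix : ∀ (a : Fin n → 𝒳) (b : Fin n → 𝒴),
      (∏ i : Fin n, Q (i : ℕ) (restr a (i : ℕ)) (restr b (i : ℕ)) (a i)) =
        lam * (∏ i : Fin n, Q1 (i : ℕ) (restr a (i : ℕ)) (restr b (i : ℕ)) (a i)) +
          (1 - lam) *
            ∏ i : Fin n, Q0 (i : ℕ) (restr a (i : ℕ)) (restr b (i : ℕ)) (a i)) :
    directedInfo (jointOfPolicy (n := n) Q P)
        (fun ab => extSeq ab.1) (fun ab => extSeq ab.2) n ≥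
      lam * directedInfo (jointOfPolicy (n := n) Q1 P)
          (fun ab => extSeq ab.1) (fun ab => extSeq ab.2) n +
        (1 - lam) * directedInfo (jointOfPolicy (n := n) Q0 P)
          (fun ab => extSeq ab.1) (fun ab => extSeq ab.2) n := by
  classical
  have hsplit : ∀ (Q' : (i : ℕ) → (Fin i → 𝒳) → (Fin i → 𝒴) → 𝒳 → ℝ)
      (ab : (Fin n → 𝒳) × (Fin n → 𝒴)),
      jointOfPolicy (n := n) Q' P ab =
        (∏ i : Fin n, Q' (i : ℕ) (restr ab.1 (i : ℕ)) (restr ab.2 (i : ℕ)) (ab.1 i)) *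
          ∏ i : Fin n, P (i : ℕ) (restr ab.1 ((i : ℕ) + 1)) (restr ab.2 (i : ℕ)) (ab.2 i) :=
    fun Q' ab => Finset.prod_mul_distrib
  have hpm : jointOfPolicy (n := n) Q P = fun ω =>
      lam * jointOfPolicy (n := n) Q1 P ω + (1 - lam) * jointOfPolicy (n := n) Q0 P ω := by
    funext ab
    rw [hsplit Q ab, hsplit Q1 ab, hsplit Q0 ab, hmix ab.1 ab.2]
    ring
  rcases eq_or_lt_of_le hlam0 with h0 | h0
  · have hQQ0 : jointOfPolicy (n := n) Q P = jointOfPolicy (n := n) Q0 P := by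
      funext ab
      rw [congrFun hpm ab, ← h0]
      ring
    rw [hQQ0, ← h0]
    simp
  rcases eq_or_lt_of_le hlam1 with h1 | h1
  · have hQQ1 : jointOfPolicy (n := n) Q P = jointOfPolicy (n := n) Q1 P := by
      funext ab
      rw [congrFun hpm ab, h1]
      ring
    rw [hQQ1, h1]
    simp
  · rw [hpm]
    unfold directedInfo
    rw [Finset.mul_sum, Finset.mul_sum, ← Finset.sum_add_distrib, ge_iff_le]
    refine Finset.sum_le_sum fun i hi => ?_
    have hin : i < n := Finset.mem_range.mp hi
    set c : (Fin n → 𝒳) × (Fin n → 𝒴) → ℝ :=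
      fun ω => P i (restr ω.1 (i + 1)) (restr ω.2 i) (ω.2 ⟨i, hin⟩) with hc
    have hUVW : ∀ ω ω' : (Fin n → 𝒳) × (Fin n → 𝒴),
        ((prefixSeq (fun ab : (Fin n → 𝒳) × (Fin n → 𝒴) => extSeq ab.1) (i + 1) ω' =
            prefixSeq (fun ab => extSeq ab.1) (i + 1) ω) ∧
          (extSeq ω'.2 i = extSeq ω.2 i) ∧
          (prefixSeq (fun ab : (Fin n → 𝒳) × (Fin n → 𝒴) => extSeq ab.2) i ω' =
            prefixSeq (fun ab => extSeq ab.2) i ω)) ↔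
        ((∀ j : Fin n, (j : ℕ) < i + 1 → ω'.1 j = ω.1 j) ∧
          (∀ j : Fin n, (j : ℕ) < i + 1 → ω'.2 j = ω.2 j)) := by
      intro ω ω'
      rw [show (prefixSeq (fun ab : (Fin n → 𝒳) × (Fin n → 𝒴) => extSeq ab.1) (i + 1) ω' =
            prefixSeq (fun ab => extSeq ab.1) (i + 1) ω) =
          ((fun j : Fin (i + 1) => extSeq ω'.1 (j : ℕ)) =
            fun j : Fin (i + 1) => extSeq ω.1 (j : ℕ)) from rfl,
        show (prefixSeq (fun ab : (Fin n → 𝒳) × (Fin n → 𝒴) => extSeq ab.2) i ω' =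
            prefixSeq (fun ab => extSeq ab.2) i ω) =
          ((fun j : Fin i => extSeq ω'.2 (j : ℕ)) = fun j : Fin i => extSeq ω.2 (j : ℕ))
          from rfl,
        extSeq_prefix_eq_iff (by omega) ω'.1 ω.1,
        extSeq_prefix_eq_iff (by omega) ω'.2 ω.2, extSeq_eq_iff hin ω'.2 ω.2]
      constructor
      · rintro ⟨hx, hyi, hy⟩
        refine ⟨hx, fun j hj => ?_⟩
        rcases Nat.lt_or_ge (j : ℕ) i with h | h
        · exact hy j h
        · have : j = ⟨i, hin⟩ := Fin.ext (show (j : ℕ) = i by omega)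
          rw [this]
          exact hyi
      · rintro ⟨hx, hy⟩
        exact ⟨hx, hy ⟨i, hin⟩ (Nat.lt_succ_self i), fun j hj => hy j (by omega)⟩
    have hUW : ∀ ω ω' : (Fin n → 𝒳) × (Fin n → 𝒴),
        ((prefixSeq (fun ab : (Fin n → 𝒳) × (Fin n → 𝒴) => extSeq ab.1) (i + 1) ω' =
            prefixSeq (fun ab => extSeq ab.1) (i + 1) ω) ∧
          (prefixSeq (fun ab : (Fin n → 𝒳) × (Fin n → 𝒴) => extSeq ab.2) i ω' =
            prefixSeq (fun ab => extSeq ab.2) i ω)) ↔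
        ((∀ j : Fin n, (j : ℕ) < i + 1 → ω'.1 j = ω.1 j) ∧
          (∀ j : Fin n, (j : ℕ) < i → ω'.2 j = ω.2 j)) := by
      intro ω ω'
      rw [show (prefixSeq (fun ab : (Fin n → 𝒳) × (Fin n → 𝒴) => extSeq ab.1) (i + 1) ω' =
            prefixSeq (fun ab => extSeq ab.1) (i + 1) ω) =
          ((fun j : Fin (i + 1) => extSeq ω'.1 (j : ℕ)) =
            fun j : Fin (i + 1) => extSeq ω.1 (j : ℕ)) from rfl,
        show (prefixSeq (fun ab : (Fin n → 𝒳) × (Fin n → 𝒴) => extSeq ab.2) i ω' =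
            prefixSeq (fun ab => extSeq ab.2) i ω) =
          ((fun j : Fin i => extSeq ω'.2 (j : ℕ)) = fun j : Fin i => extSeq ω.2 (j : ℕ))
          from rfl,
        extSeq_prefix_eq_iff (by omega) ω'.1 ω.1,
        extSeq_prefix_eq_iff (by omega) ω'.2 ω.2]
    have hcq : ∀ (Q' : (i : ℕ) → (Fin i → 𝒳) → (Fin i → 𝒴) → 𝒳 → ℝ),
        (∀ i xs ys, ∑ x, Q' i xs ys x = 1) →
        ∀ ω : (Fin n → 𝒳) × (Fin n → 𝒴),
        pr (jointOfPolicy (n := n) Q' P)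
          (fun ω' => prefixSeq (fun ab : (Fin n → 𝒳) × (Fin n → 𝒴) => extSeq ab.1)
              (i + 1) ω' = prefixSeq (fun ab => extSeq ab.1) (i + 1) ω ∧
            extSeq ω'.2 i = extSeq ω.2 i ∧
            prefixSeq (fun ab : (Fin n → 𝒳) × (Fin n → 𝒴) => extSeq ab.2) i ω' =
              prefixSeq (fun ab => extSeq ab.2) i ω) =
        c ω * pr (jointOfPolicy (n := n) Q' P)
          (fun ω' => prefixSeq (fun ab : (Fin n → 𝒳) × (Fin n → 𝒴) => extSeq ab.1)
              (i + 1) ω' = prefixSeq (fun ab => extSeq ab.1) (i + 1) ω ∧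
            prefixSeq (fun ab : (Fin n → 𝒳) × (Fin n → 𝒴) => extSeq ab.2) i ω' =
              prefixSeq (fun ab => extSeq ab.2) i ω) := by
      intro Q' hQ'1 ω
      rw [pr_congr _ (hUVW ω), pr_congr _ (hUW ω)]
      exact channel_cond Q' P hQ'1 hP1 i hin ω
    refine cmi_concave (jointOfPolicy (n := n) Q0 P) (jointOfPolicy (n := n) Q1 P)
      (joint_nonneg Q0 P hQ00 hP0) (joint_sum_one Q0 P hQ01 hP1)
      (joint_nonneg Q1 P hQ10 hP0) (joint_sum_one Q1 P hQ11 hP1)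
      lam h0 h1 _ _ _ c (hcq Q0 hQ01) (hcq Q1 hQ11) ?_
    intro ω
    rw [← hpm]
    exact hcq Q hQ1 ω
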